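/- Let n ≥ 1 and let R_1, …, R_{n+1} be exchangeable real-valued random variables. Define the conformal p-value π = (1 + #{i ∈ {1,…,n} : R_i ≥ R_{n+1}})/(n+1). Then for every α ∈ (0,1), P(π ≤ α) ≤ α; equivalently, P(π > α) ≥ 1 − α. -/

import Mathlib

open MeasureTheory Filter Set
open scoped ENNReal

/-- A finite family of random elements is exchangeable if its joint distribution is
invariant under permutations of the indices. -/
def Exchangeable {Ω E : Type*} [MeasurableSpace Ω] [MeasurableSpace E]
    (μ : Measure Ω) {k : ℕ} (V : Fin k → Ω → E) : Prop :=
  ∀ σ : Equiv.Perm (Fin k),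
    Measure.map (fun ω (i : Fin k) => V (σ i) ω) μ =
      Measure.map (fun ω (i : Fin k) => V i ω) μ

section Aux

open Finset

variable {n : ℕ}

/-- number of indices `i ≠ j` with `v j ≤ v i`. -/
noncomputable def cntAux (n : ℕ) (j : Fin (n + 1)) (v : Fin (n + 1) → ℝ) : ℕ :=
  (Finset.univ.filter (fun i => i ≠ j ∧ v j ≤ v i)).card

lemma cntAux_comp (σ : Equiv.Perm (Fin (n + 1))) (v : Fin (n + 1) → ℝ) :
    cntAux n (Fin.last n) (fun i => v (σ i)) = cntAux n (σ (Fin.last n)) v := by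
  classical
  unfold cntAux
  refine Finset.card_bij (fun i _ => σ i) ?_ ?_ ?_
  · intro a ha
    simp only [Finset.mem_filter, Finset.mem_univ, true_and] at ha ⊢
    exact ⟨fun h => ha.1 (σ.injective h), ha.2⟩
  · intro a _ b _ h
    exact σ.injective h
  · intro b hb
    simp only [Finset.mem_filter, Finset.mem_univ, true_and] at hb
    refine ⟨σ.symm b, ?_, by simp⟩
    simp only [Finset.mem_filter, Finset.mem_univ, true_and, Equiv.apply_symm_apply]
    exact ⟨fun h => hb.1 (by rw [← h]; simp), hb.2⟩

lemma cntAux_eq_natCard (v : Fin (n + 1) → ℝ) :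
    (Nat.card {i : Fin n // v (Fin.last n) ≤ v i.castSucc} : ℕ) =
      cntAux n (Fin.last n) v := by
  classical
  rw [Nat.card_eq_fintype_card, Fintype.card_subtype]
  unfold cntAux
  refine Finset.card_bij (fun i _ => Fin.castSucc i) ?_ ?_ ?_
  · intro a ha
    simp only [Finset.mem_filter, Finset.mem_univ, true_and] at ha ⊢
    exact ⟨Fin.exists_castSucc_eq.mp ⟨a, rfl⟩, ha⟩
  · intro a _ b _ h
    exact Fin.castSucc_injective n h
  · intro b hb
    simp only [Finset.mem_filter, Finset.mem_univ, true_and] at hb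
    obtain ⟨a, rfl⟩ := Fin.exists_castSucc_eq.mpr hb.1
    exact ⟨a, by simpa using hb.2, rfl⟩

lemma cntAux_measurable (j : Fin (n + 1)) : Measurable (cntAux n j) := by
  classical
  have h : cntAux n j = fun v => ∑ i : Fin (n + 1), if i ≠ j ∧ v j ≤ v i then 1 else 0 := by
    funext v
    unfold cntAux
    rw [Finset.card_filter]
  rw [h]
  refine Finset.measurable_sum _ (fun i _ => ?_)
  by_cases hij : i = j
  · simp [hij]
  · simp only [hij, ne_eq, not_false_iff, true_and]
    exact Measurable.ite (measurableSet_le (measurable_pi_apply j) (measurable_pi_apply i))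
      measurable_const measurable_const

/-- deterministic key fact: at most `k+1` indices can have count `≤ k`. -/
lemma card_cntAux_le (v : Fin (n + 1) → ℝ) (k : ℕ) :
    (Finset.univ.filter (fun j => cntAux n j v ≤ k)).card ≤ k + 1 := by
  classical
  set S := Finset.univ.filter (fun j => cntAux n j v ≤ k) with hS
  by_cases hne : S.Nonempty
  · obtain ⟨j0, hj0, hmin⟩ := S.exists_min_image v hne
    have hsub : S.erase j0 ⊆ Finset.univ.filter (fun i => i ≠ j0 ∧ v j0 ≤ v i) := by
      intro i hi
      rcases Finset.mem_erase.mp hi with ⟨hij, hiS⟩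
      simp only [Finset.mem_filter, Finset.mem_univ, true_and]
      exact ⟨hij, hmin i hiS⟩
    have h1 : S.card - 1 ≤ cntAux n j0 v := by
      have := Finset.card_le_card hsub
      rw [Finset.card_erase_of_mem hj0] at this
      exact this
    have h2 : cntAux n j0 v ≤ k := by
      have := Finset.mem_filter.mp hj0
      exact this.2
    have hpos : 1 ≤ S.card := Finset.card_pos.mpr hne
    omega
  · rw [Finset.not_nonempty_iff_eq_empty] at hne
    simp [hne]

end Aux

/-- For exchangeable scores `R_1, …, R_{n+1}`, the conformal p-value
`π = (1 + #{i ≤ n : R_i ≥ R_{n+1}})/(n+1)` satisfies `P(π ≤ α) ≤ α`, equivalently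
`P(π > α) ≥ 1 - α`, for every `α ∈ (0,1)`. -/
theorem conformal_pvalue_superuniform
    {Ω : Type*} [MeasurableSpace Ω] (μ : Measure Ω) [IsProbabilityMeasure μ]
    (n : ℕ) (hn : 1 ≤ n)
    (R : Fin (n + 1) → Ω → ℝ)
    (hRmeas : ∀ i, Measurable (R i))
    (hexch : Exchangeable μ R)
    (π : Ω → ℝ)
    (hπ : ∀ ω, π ω =
      (1 + (Nat.card {i : Fin n // R (Fin.last n) ω ≤ R i.castSucc ω} : ℝ)) / (n + 1))
    (α : ℝ) (hα : α ∈ Set.Ioo (0 : ℝ) 1) :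
    μ {ω | π ω ≤ α} ≤ ENNReal.ofReal α ∧
      ENNReal.ofReal (1 - α) ≤ μ {ω | α < π ω} := by
  classical
  obtain ⟨hα0, hα1⟩ := hα
  set Rv : Ω → Fin (n + 1) → ℝ := fun ω i => R i ω with hRv
  have hRvmeas : Measurable Rv := measurable_pi_lambda _ (fun i => hRmeas i)
  set m : ℕ := ⌊α * (n + 1)⌋₊ with hm
  have hαn_nonneg : (0 : ℝ) ≤ α * (n + 1) := by positivity
  -- the event {π ≤ α} in terms of the count
  have hEvent : {ω | π ω ≤ α} = {ω | cntAux n (Fin.last n) (Rv ω) + 1 ≤ m} := by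
    ext ω
    simp only [Set.mem_setOf_eq, hπ ω]
    have hcard : (Nat.card {i : Fin n // R (Fin.last n) ω ≤ R i.castSucc ω} : ℝ) =
        (cntAux n (Fin.last n) (Rv ω) : ℝ) := by
      exact_mod_cast congrArg (Nat.cast (R := ℝ)) (cntAux_eq_natCard (Rv ω))
    rw [hcard]
    rw [div_le_iff₀ (by positivity)]
    rw [hm, Nat.le_floor_iff hαn_nonneg]
    push_cast
    constructor <;> intro h <;> linarith
  have hEventMeas : MeasurableSet {ω | π ω ≤ α} := by
    rw [hEvent]
    exact (measurableSet_le (((cntAux_measurable (Fin.last n)).comp hRvmeas).add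
      measurable_const) measurable_const)
  have hfirst : μ {ω | π ω ≤ α} ≤ ENNReal.ofReal α := by
    rcases Nat.eq_zero_or_pos m with hm0 | hmpos
    · rw [hEvent, hm0]
      convert (zero_le : (0 : ℝ≥0∞) ≤ _)
      rw [measure_eq_zero_iff_ae_notMem]
      filter_upwards with ω
      simp
    · set k : ℕ := m - 1 with hk
      have hkm : k + 1 = m := by omega
      -- events
      set A : Fin (n + 1) → Set Ω := fun j => {ω | cntAux n j (Rv ω) ≤ k} with hA
      have hAmeas : ∀ j, MeasurableSet (A j) := fun j =>
        measurableSet_le ((cntAux_measurable j).comp hRvmeas) measurable_const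
      -- all events have the same probability by exchangeability
      have hsame : ∀ j, μ (A j) = μ (A (Fin.last n)) := by
        intro j
        set σ : Equiv.Perm (Fin (n + 1)) := Equiv.swap (Fin.last n) j with hσ
        have hσlast : σ (Fin.last n) = j := Equiv.swap_apply_left _ _
        have hset : MeasurableSet {v : Fin (n + 1) → ℝ | cntAux n (Fin.last n) v ≤ k} :=
          measurableSet_le (cntAux_measurable (Fin.last n)) measurable_const
        have hmeasσ : Measurable (fun ω (i : Fin (n + 1)) => R (σ i) ω) :=
          measurable_pi_lambda _ (fun i => hRmeas (σ i))
        have h1 : μ (A j) =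
            Measure.map (fun ω (i : Fin (n + 1)) => R (σ i) ω) μ
              {v | cntAux n (Fin.last n) v ≤ k} := by
          rw [Measure.map_apply hmeasσ hset]
          congr 1
          ext ω
          simp only [Set.mem_preimage, Set.mem_setOf_eq, hA]
          rw [cntAux_comp σ (Rv ω), hσlast]
        have h2 : Measure.map (fun ω (i : Fin (n + 1)) => R i ω) μ
            {v | cntAux n (Fin.last n) v ≤ k} = μ (A (Fin.last n)) := by
          rw [Measure.map_apply hRvmeas hset]
          rfl
        rw [h1, hexch σ, h2]
      -- sum of the probabilities is at most k+1
      have hsum : ∑ j : Fin (n + 1), μ (A j) ≤ (k + 1 : ℕ) := by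
        have heq : ∀ j : Fin (n + 1), μ (A j) = ∫⁻ ω, (A j).indicator 1 ω ∂μ := by
          intro j
          rw [lintegral_indicator_one (hAmeas j)]
        calc ∑ j : Fin (n + 1), μ (A j)
            = ∑ j : Fin (n + 1), ∫⁻ ω, (A j).indicator 1 ω ∂μ := by
              exact Finset.sum_congr rfl (fun j _ => heq j)
          _ = ∫⁻ ω, ∑ j : Fin (n + 1), (A j).indicator 1 ω ∂μ := by
              rw [lintegral_finset_sum]
              exact fun j _ => measurable_one.indicator (hAmeas j)
          _ ≤ ∫⁻ _, ((k + 1 : ℕ) : ℝ≥0∞) ∂μ := by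
              refine lintegral_mono (fun ω => ?_)
              have : ∑ j : Fin (n + 1), (A j).indicator (1 : Ω → ℝ≥0∞) ω =
                  ((Finset.univ.filter (fun j : Fin (n + 1) =>
                    cntAux n j (Rv ω) ≤ k)).card : ℝ≥0∞) := by
                rw [Finset.card_filter]
                push_cast
                refine Finset.sum_congr rfl (fun j _ => ?_)
                by_cases hj : cntAux n j (Rv ω) ≤ k
                · simp [Set.indicator_of_mem, hA, hj, Set.mem_setOf_eq]
                · simp [Set.indicator_of_notMem, hA, hj, Set.mem_setOf_eq]
              rw [this]
              exact (Nat.cast_le (α := ℝ≥0∞)).mpr (card_cntAux_le (Rv ω) k)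
          _ = ((k + 1 : ℕ) : ℝ≥0∞) := by
              rw [lintegral_const, measure_univ, mul_one]
      have hsum' : ((n + 1 : ℕ) : ℝ≥0∞) * μ (A (Fin.last n)) ≤ ((k + 1 : ℕ) : ℝ≥0∞) := by
        calc ((n + 1 : ℕ) : ℝ≥0∞) * μ (A (Fin.last n))
            = ∑ _j : Fin (n + 1), μ (A (Fin.last n)) := by
              rw [Finset.sum_const, Finset.card_univ, Fintype.card_fin, nsmul_eq_mul]
          _ = ∑ j : Fin (n + 1), μ (A j) := by
              exact Finset.sum_congr rfl (fun j _ => (hsame j).symm)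
          _ ≤ _ := hsum
      -- conclude
      have hmle : ((m : ℕ) : ℝ≥0∞) ≤ ((n + 1 : ℕ) : ℝ≥0∞) * ENNReal.ofReal α := by
        have h1 : (m : ℝ) ≤ α * (n + 1) := Nat.floor_le hαn_nonneg
        calc ((m : ℕ) : ℝ≥0∞) = ENNReal.ofReal (m : ℝ) := by
              rw [ENNReal.ofReal_natCast]
          _ ≤ ENNReal.ofReal (α * (n + 1)) := ENNReal.ofReal_le_ofReal h1
          _ = ENNReal.ofReal α * ENNReal.ofReal ((n : ℝ) + 1) := by
              rw [ENNReal.ofReal_mul (le_of_lt hα0)]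
          _ = ((n + 1 : ℕ) : ℝ≥0∞) * ENNReal.ofReal α := by
              rw [mul_comm]
              congr 1
              rw [← ENNReal.ofReal_natCast (n + 1)]
              congr 1
              push_cast
              ring
      have hfin : μ {ω | π ω ≤ α} = μ (A (Fin.last n)) := by
        rw [hEvent]
        congr 1
        ext ω
        simp only [Set.mem_setOf_eq, hA]
        omega
      rw [hfin]
      have hcancel : ((n + 1 : ℕ) : ℝ≥0∞) * μ (A (Fin.last n)) ≤
          ((n + 1 : ℕ) : ℝ≥0∞) * ENNReal.ofReal α := by
        calc ((n + 1 : ℕ) : ℝ≥0∞) * μ (A (Fin.last n)) ≤ ((k + 1 : ℕ) : ℝ≥0∞) := hsum'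
          _ = ((m : ℕ) : ℝ≥0∞) := by rw [hkm]
          _ ≤ _ := hmle
      exact (ENNReal.mul_le_mul_iff_right (by exact_mod_cast Nat.succ_ne_zero n)
        (ENNReal.natCast_ne_top _)).mp hcancel
  refine ⟨hfirst, ?_⟩
  have hcompl : {ω | α < π ω} = {ω | π ω ≤ α}ᶜ := by
    ext ω; simp [not_le]
  rw [hcompl, measure_compl hEventMeas (measure_ne_top μ _), measure_univ]
  have h1 : ENNReal.ofReal (1 - α) = 1 - ENNReal.ofReal α := by
    rw [ENNReal.ofReal_sub _ (le_of_lt hα0), ENNReal.ofReal_one]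
  rw [h1]
  exact tsub_le_tsub_left hfirst 1
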